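/- Define the scaled Jacobi leading coefficients k_j^{(s)} = (1/(2^j j!))·Γ(2j+s+1)/Γ(j+s+1). Then for any integer p and any sequence κ_n of naturals with κ_n/n → κ > 0, lim_{n→∞} k_{κ_n+p}^{(s)}/k_{κ_n}^{(s)} = 2^p. -/

import Mathlib

open Filter

/-- The leading coefficient of the Jacobi polynomial `P_j^{(s,0)}`:
`k_j^{(s)} = (1/(2^j j!))·Γ(2j+s+1)/Γ(j+s+1)`. -/
noncomputable def kcoef (s : ℝ) (j : ℕ) : ℝ :=
  (1 / ((2 : ℝ) ^ j * (j.factorial : ℝ))) *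
    (Real.Gamma (2 * j + s + 1) / Real.Gamma (j + s + 1))

lemma kcoef_pos (s : ℝ) (hs : -1 < s) (j : ℕ) : 0 < kcoef s j := by
  unfold kcoef
  have hj : (0:ℝ) ≤ (j:ℝ) := j.cast_nonneg
  have h1 : (0:ℝ) < 2 * j + s + 1 := by linarith
  have h2 : (0:ℝ) < j + s + 1 := by linarith
  have g1 := Real.Gamma_pos_of_pos h1
  have g2 := Real.Gamma_pos_of_pos h2
  have hf : (0:ℝ) < (j.factorial : ℝ) := by exact_mod_cast j.factorial_pos
  positivity

lemma kcoef_succ_ratio (s : ℝ) (hs : -1 < s) (j : ℕ) :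
    kcoef s (j+1) / kcoef s j
      = ((2*j+s+1)*(2*j+s+2)) / (2*((j:ℝ)+1)*(j+s+1)) := by
  have hj : (0:ℝ) ≤ (j:ℝ) := j.cast_nonneg
  have h1 : (0:ℝ) < 2 * j + s + 1 := by linarith
  have h2 : (0:ℝ) < j + s + 1 := by linarith
  have g1 := Real.Gamma_pos_of_pos h1
  have g2 := Real.Gamma_pos_of_pos h2
  have hf : (0:ℝ) < (j.factorial : ℝ) := by exact_mod_cast j.factorial_pos
  have e1 : Real.Gamma (2*((j:ℝ)+1) + s + 1)
      = (2*j+s+2)*(2*j+s+1) * Real.Gamma (2*j+s+1) := by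
    have : 2*((j:ℝ)+1) + s + 1 = (2*(j:ℝ)+s+2) + 1 := by ring
    rw [this, Real.Gamma_add_one (by linarith)]
    have : 2*(j:ℝ)+s+2 = (2*(j:ℝ)+s+1) + 1 := by ring
    rw [this, Real.Gamma_add_one (by linarith)]
    ring
  have e2 : Real.Gamma ((j:ℝ)+1 + s + 1) = (j+s+1) * Real.Gamma (j+s+1) := by
    have : (j:ℝ)+1 + s + 1 = ((j:ℝ)+s+1) + 1 := by ring
    rw [this, Real.Gamma_add_one (by linarith)]
  unfold kcoef
  push_cast [Nat.factorial_succ, pow_succ]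
  rw [e1, e2]
  have hp : ((2:ℝ)^j) ≠ 0 := by positivity
  field_simp

lemma ratio_tendsto (s : ℝ) (hs : -1 < s) :
    Tendsto (fun j : ℕ => kcoef s (j+1) / kcoef s j) atTop (nhds 2) := by
  have hinv : Tendsto (fun x : ℝ => x⁻¹) atTop (nhds 0) := tendsto_inv_atTop_zero
  have key : Tendsto (fun x : ℝ =>
      ((2+(s+1)*x⁻¹)*(2+(s+2)*x⁻¹)) / (2*(1+x⁻¹)*(1+(s+1)*x⁻¹)))
      atTop (nhds (((2+(s+1)*0)*(2+(s+2)*0)) / (2*(1+0)*(1+(s+1)*0)))) := by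
    apply Tendsto.div
    · exact (tendsto_const_nhds.add (tendsto_const_nhds.mul hinv)).mul
        (tendsto_const_nhds.add (tendsto_const_nhds.mul hinv))
    · exact ((tendsto_const_nhds.mul (tendsto_const_nhds.add hinv))).mul
        (tendsto_const_nhds.add (tendsto_const_nhds.mul hinv))
    · norm_num
  have key2 : Tendsto (fun x : ℝ =>
      ((2*x+s+1)*(2*x+s+2)) / (2*(x+1)*(x+s+1))) atTop (nhds 2) := by
    have hlim : (((2:ℝ)+(s+1)*0)*(2+(s+2)*0)) / (2*(1+0)*(1+(s+1)*0)) = 2 := by norm_num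
    rw [hlim] at key
    refine key.congr' ?_
    filter_upwards [eventually_gt_atTop (|s| + 2)] with x hx
    have hxs : |s| < x := by linarith [abs_nonneg s]
    have hx0 : (0:ℝ) < x := by linarith [abs_nonneg s]
    have hs1 : -x < s := by
      have := neg_abs_le s; linarith
    have h1 : (0:ℝ) < x + 1 := by linarith
    have h2 : (0:ℝ) < x + s + 1 := by linarith
    have hd1 : (1:ℝ) + x⁻¹ ≠ 0 := by positivity
    have hd2 : (1:ℝ) + (s+1) * x⁻¹ ≠ 0 := by
      have : (1:ℝ) + (s+1) * x⁻¹ = (x + s + 1) / x := by field_simp; ring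
      rw [this]; positivity
    have hx0' : x ≠ 0 := hx0.ne'
    have hD1 : (2*(1+x⁻¹)*(1+(s+1)*x⁻¹)) ≠ 0 := by
      apply mul_ne_zero (mul_ne_zero two_ne_zero hd1) hd2
    have hD2 : (2*(x+1)*(x+s+1)) ≠ 0 := by positivity
    rw [div_eq_div_iff hD1 hD2]
    field_simp
    ring
  have comp := key2.comp
    (tendsto_natCast_atTop_atTop : Tendsto (fun n : ℕ => (n:ℝ)) atTop atTop)
  refine comp.congr ?_
  intro j
  simp only [Function.comp]
  rw [kcoef_succ_ratio s hs j]

lemma ratio_pow (s : ℝ) (hs : -1 < s) (q : ℕ) :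
    Tendsto (fun j : ℕ => kcoef s (j+q) / kcoef s j) atTop (nhds ((2:ℝ)^q)) := by
  induction q with
  | zero => simp [div_self (kcoef_pos s hs _).ne']
  | succ q ih =>
    have h1 : Tendsto (fun j : ℕ => kcoef s (j+q+1) / kcoef s (j+q)) atTop (nhds 2) :=
      (ratio_tendsto s hs).comp (tendsto_add_atTop_nat q)
    have h := h1.mul ih
    rw [pow_succ, mul_comm ((2:ℝ)^q) 2]
    refine h.congr fun j => ?_
    have hb := (kcoef_pos s hs (j+q)).ne'
    have e : j + (q+1) = j + q + 1 := by omega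
    rw [e]
    field_simp

/-- For any integer `p` and `κ_n/n → κ > 0`, `k_{κ_n+p}^{(s)}/k_{κ_n}^{(s)} → 2^p`. -/
theorem kcoef_ratio_limit (s : ℝ) (hs : -1 < s) (p : ℤ) (κ : ℝ) (hκ : 0 < κ)
    (κn : ℕ → ℕ) (hκn : Tendsto (fun n => (κn n : ℝ) / n) atTop (nhds κ)) :
    Tendsto (fun n => kcoef s ((κn n : ℤ) + p).toNat / kcoef s (κn n))
      atTop (nhds ((2 : ℝ) ^ p)) := by
  have hκtop : Tendsto κn atTop atTop := by
    have h1 : Tendsto (fun n => ((κn n : ℝ) / n) * n) atTop atTop :=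
      hκn.pos_mul_atTop hκ tendsto_natCast_atTop_atTop
    have h2 : Tendsto (fun n : ℕ => (κn n : ℝ)) atTop atTop := by
      refine h1.congr' ?_
      filter_upwards [eventually_gt_atTop 0] with n hn
      have : (n:ℝ) ≠ 0 := by positivity
      field_simp
    exact tendsto_natCast_atTop_iff.mp h2
  obtain ⟨q, rfl | rfl⟩ := p.eq_nat_or_neg
  · have := (ratio_pow s hs q).comp hκtop
    rw [zpow_natCast]
    refine this.congr ?_
    intro n
    simp only [Function.comp]
    have e : ((κn n : ℤ) + (q:ℤ)).toNat = κn n + q := by omega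
    rw [e]
  · have hsub : Tendsto (fun n => κn n - q) atTop atTop :=
      (tendsto_sub_atTop_nat q).comp hκtop
    have h := ((ratio_pow s hs q).comp hsub).inv₀ (by positivity)
    rw [zpow_neg, zpow_natCast]
    refine h.congr' ?_
    filter_upwards [hκtop.eventually (eventually_ge_atTop q)] with n hn
    simp only [Function.comp]
    have e : κn n - q + q = κn n := by omega
    rw [e, inv_div]
    have e2 : ((κn n : ℤ) + -(q:ℤ)).toNat = κn n - q := by omega
    rw [e2]
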